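/- Under the Volterra equation hypotheses with H*(n) → ∞ and λ := lim H*₋(n)/H*₊(n) ∈ (0,∞), one has x*₊(n) → ∞, x*₋(n) → ∞, lim x*₊(n)/H*₊(n) = 1 and lim x*₋(n)/H*₋(n) = 1, where x*₊(n) = max_{0≤j≤n} x(j), x*₋(n) = max_{0≤j≤n}(−x(j)). -/

import Mathlib

open Filter Finset Topology

/-- Running maximum of `g` over `{1,…,n}` (value `0` when `n = 0`). -/
noncomputable def runMax1 (g : ℕ → ℝ) (n : ℕ) : ℝ :=
  if h : 1 ≤ n then (Finset.Icc 1 n).sup' (Finset.nonempty_Icc.mpr h) g else 0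

/-- Running maximum of `g` over `{0,…,n}`. -/
noncomputable def runMax0 (g : ℕ → ℝ) (n : ℕ) : ℝ :=
  (Finset.Icc 0 n).sup' (Finset.nonempty_Icc.mpr (Nat.zero_le n)) g

lemma le_runMax0 (g : ℕ → ℝ) {j n : ℕ} (h : j ≤ n) : g j ≤ runMax0 g n :=
  Finset.le_sup' g (Finset.mem_Icc.mpr ⟨Nat.zero_le j, h⟩)

lemma runMax0_le (g : ℕ → ℝ) {n : ℕ} {a : ℝ} (h : ∀ j ≤ n, g j ≤ a) : runMax0 g n ≤ a :=
  Finset.sup'_le _ _ fun j hj => h j (Finset.mem_Icc.mp hj).2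

lemma le_runMax1 (g : ℕ → ℝ) {j n : ℕ} (h1 : 1 ≤ j) (h : j ≤ n) : g j ≤ runMax1 g n := by
  rw [runMax1, dif_pos (h1.trans h)]
  exact Finset.le_sup' g (Finset.mem_Icc.mpr ⟨h1, h⟩)

lemma runMax1_le (g : ℕ → ℝ) {n : ℕ} (hn : 1 ≤ n) {a : ℝ}
    (h : ∀ j, 1 ≤ j → j ≤ n → g j ≤ a) : runMax1 g n ≤ a := by
  rw [runMax1, dif_pos hn]
  exact Finset.sup'_le _ _ fun j hj => h j (Finset.mem_Icc.mp hj).1 (Finset.mem_Icc.mp hj).2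

lemma runMax1_mono (g : ℕ → ℝ) {m n : ℕ} (h1 : 1 ≤ m) (h : m ≤ n) :
    runMax1 g m ≤ runMax1 g n :=
  runMax1_le g h1 fun j hj1 hj2 => le_runMax1 g hj1 (hj2.trans h)

lemma runMax1_abs_nonneg (g : ℕ → ℝ) (n : ℕ) : 0 ≤ runMax1 (fun j => |g j|) n := by
  rcases Nat.eq_zero_or_pos n with h | h
  · simp [runMax1, h]
  · exact le_trans (abs_nonneg (g 1)) (le_runMax1 (fun j => |g j|) le_rfl h)

lemma runMax1_abs_mono (g : ℕ → ℝ) {m n : ℕ} (h : m ≤ n) :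
    runMax1 (fun j => |g j|) m ≤ runMax1 (fun j => |g j|) n := by
  rcases Nat.eq_zero_or_pos m with hm | hm
  · rw [hm]; simpa [runMax1] using runMax1_abs_nonneg g n
  · exact runMax1_mono _ hm h

lemma sublin_bound (f : ℝ → ℝ) (hf : Continuous f)
    (hsub : Tendsto (fun y => f y / y) (cocompact ℝ) (nhds 0)) :
    ∀ ε > 0, ∃ B, 0 ≤ B ∧ ∀ y, |f y| ≤ ε * |y| + B := by
  intro ε hε
  have h1 : {y : ℝ | dist (f y / y) (0:ℝ) < ε} ∈ cocompact ℝ :=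
    hsub (Metric.ball_mem_nhds (0:ℝ) hε)
  obtain ⟨K, hK, hKs⟩ := mem_cocompact.mp h1
  obtain ⟨R, hR⟩ := hK.isBounded.subset_closedBall 0
  set R' : ℝ := max R 0 + 1 with hR'
  have hR'pos : 0 < R' := by positivity
  obtain ⟨B, hB⟩ := (isCompact_Icc (a := -R') (b := R')).exists_bound_of_continuousOn
    hf.continuousOn
  refine ⟨max B 0, le_max_right _ _, fun y => ?_⟩
  by_cases hy : |y| ≤ R'
  · have hfy : |f y| ≤ B := by
      have hmem : y ∈ Set.Icc (-R') R' := by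
        rw [Set.mem_Icc]; exact ⟨by linarith [(abs_le.mp hy).1], (abs_le.mp hy).2⟩
      simpa using hB y hmem
    have h0 : 0 ≤ ε * |y| := mul_nonneg hε.le (abs_nonneg y)
    have : B ≤ max B 0 := le_max_left _ _
    linarith
  · push_neg at hy
    have hy0 : y ≠ 0 := by
      intro h; rw [h] at hy; simp at hy; linarith
    have hnK : y ∉ K := by
      intro hyK
      have := hR hyK
      simp only [Metric.mem_closedBall, Real.dist_eq, sub_zero] at this
      have : |y| ≤ max R 0 := this.trans (le_max_left _ _)
      linarith
    have hlt : |f y / y| < ε := by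
      have := hKs hnK
      rwa [Set.mem_setOf_eq, Real.dist_0_eq_abs] at this
    have heq : |f y| = |f y / y| * |y| := by
      rw [abs_div]; field_simp
    rw [heq]
    have h2 : |f y / y| * |y| ≤ ε * |y| := mul_le_mul_of_nonneg_right hlt.le (abs_nonneg y)
    linarith [le_max_right B 0]

set_option maxHeartbeats 1600000 in
theorem stmt15
(f : ℝ → ℝ) (k H x : ℕ → ℝ) (ξ : ℝ)
    (hf : Continuous f)
    (hsub : Filter.Tendsto (fun y => f y / y) (Filter.cocompact ℝ) (nhds 0))
    (hk : Summable (fun j => |k j|))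
    (hx0 : x 0 = ξ)
    (hx : ∀ n : ℕ, x (n + 1) = H (n + 1) + ∑ j ∈ Finset.range (n + 1), k (n - j) * f (x j))
    (hH : Filter.Tendsto (fun n => runMax1 (fun j => |H j|) n) Filter.atTop Filter.atTop)
    (lam : ℝ) (hlam0 : 0 < lam)
    (hlam : Filter.Tendsto
      (fun n => runMax1 (fun j => -H j) n / runMax1 H n) Filter.atTop (nhds lam)) :
    Filter.Tendsto (fun n => runMax0 x n) Filter.atTop Filter.atTop ∧
    Filter.Tendsto (fun n => runMax0 (fun j => -x j) n) Filter.atTop Filter.atTop ∧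
    Filter.Tendsto (fun n => runMax0 x n / runMax1 H n) Filter.atTop (nhds 1) ∧
    Filter.Tendsto
      (fun n => runMax0 (fun j => -x j) n / runMax1 (fun j => -H j) n)
      Filter.atTop (nhds 1) := by
  classical
  set K : ℝ := ∑' j, |k j| with hKdef
  have hK0 : 0 ≤ K := tsum_nonneg fun j => abs_nonneg _
  set Hs : ℕ → ℝ := fun n => runMax1 (fun j => |H j|) n with hHsdef
  set Hp : ℕ → ℝ := fun n => runMax1 H n with hHpdef
  set Hm : ℕ → ℝ := fun n => runMax1 (fun j => -H j) n with hHmdef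
  set X : ℕ → ℝ := fun n => runMax0 (fun j => |x j|) n with hXdef
  set Xp : ℕ → ℝ := fun n => runMax0 x n with hXpdef
  set Xm : ℕ → ℝ := fun n => runMax0 (fun j => -x j) n with hXmdef
  have hHs0 : ∀ n, 0 ≤ Hs n := runMax1_abs_nonneg H
  have hHsm : ∀ {m n : ℕ}, m ≤ n → Hs m ≤ Hs n := fun h => runMax1_abs_mono H h
  have hX0 : ∀ n, 0 ≤ X n := fun n =>
    (abs_nonneg (x 0)).trans (le_runMax0 (fun j => |x j|) (Nat.zero_le n))
  have hXle : ∀ {j n : ℕ}, j ≤ n → |x j| ≤ X n := fun h => le_runMax0 (fun j => |x j|) h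
  have hHabs : ∀ {j n : ℕ}, 1 ≤ j → j ≤ n → |H j| ≤ Hs n :=
    fun h1 h2 => le_runMax1 (fun j => |H j|) h1 h2
  have hconv : ∀ n, ∑ j ∈ Finset.range (n+1), |k (n - j)| ≤ K := by
    intro n
    have h1 : ∑ j ∈ Finset.range (n+1), |k (n - j)| = ∑ j ∈ Finset.range (n+1), |k j| := by
      have := Finset.sum_range_reflect (fun i => |k i|) (n+1)
      simpa using this
    rw [h1]
    exact Summable.sum_le_tsum _ (fun i _ => abs_nonneg _) hk
  -- generic step estimate
  have hstep : ∀ ε B : ℝ, 0 ≤ ε → 0 ≤ B → (∀ y, |f y| ≤ ε * |y| + B) →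
      ∀ n, |x (n+1) - H (n+1)| ≤ K * (ε * X n + B) := by
    intro ε B hε hB hfB n
    have h1 : x (n+1) - H (n+1) = ∑ j ∈ Finset.range (n+1), k (n - j) * f (x j) := by
      rw [hx n]; ring
    rw [h1]
    calc |∑ j ∈ Finset.range (n+1), k (n - j) * f (x j)|
        ≤ ∑ j ∈ Finset.range (n+1), |k (n - j) * f (x j)| :=
          Finset.abs_sum_le_sum_abs _ _
      _ ≤ ∑ j ∈ Finset.range (n+1), |k (n - j)| * (ε * X n + B) := by
          refine Finset.sum_le_sum fun j hj => ?_
          rw [abs_mul]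
          refine mul_le_mul_of_nonneg_left ?_ (abs_nonneg _)
          have hj' : j ≤ n := Nat.lt_succ_iff.mp (Finset.mem_range.mp hj)
          have := hfB (x j)
          have := hXle hj'
          nlinarith
      _ = (∑ j ∈ Finset.range (n+1), |k (n - j)|) * (ε * X n + B) := by
          rw [Finset.sum_mul]
      _ ≤ K * (ε * X n + B) := by
          refine mul_le_mul_of_nonneg_right (hconv n) ?_
          exact add_nonneg (mul_nonneg hε (hX0 n)) hB
  -- a priori bound on X
  obtain ⟨B₀, hB₀, hfB₀⟩ := sublin_bound f hf hsub (1/(2*(K+1))) (by positivity)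
  set C₁ : ℝ := 2*|ξ| + 2*K*B₀ with hC₁def
  have hC₁ : 0 ≤ C₁ := by positivity
  have hKe : K * (1/(2*(K+1))) ≤ 1/2 := by
    rw [mul_one_div, div_le_iff₀ (by positivity)]
    linarith
  have hXb : ∀ n, X n ≤ 2 * Hs n + C₁ := by
    intro n
    induction n using Nat.strong_induction_on with
    | _ n ih =>
      refine runMax0_le _ fun j hj => ?_
      show |x j| ≤ 2 * Hs n + C₁
      match j, hj with
      | 0, _ =>
        rw [hx0]
        have := hHs0 n
        rw [hC₁def]; nlinarith
      | (m+1), hj =>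
        have hm : m < n := Nat.lt_of_lt_of_le (Nat.lt_succ_self m) hj
        have h1 := hstep (1/(2*(K+1))) B₀ (by positivity) hB₀ hfB₀ m
        have h2 : |x (m+1)| - |H (m+1)| ≤ |x (m+1) - H (m+1)| :=
          abs_sub_abs_le_abs_sub _ _
        have h3 : |H (m+1)| ≤ Hs n := hHabs (Nat.succ_le_succ (Nat.zero_le m)) hj
        have h4 : X m ≤ 2 * Hs m + C₁ := ih m hm
        have h5 : Hs m ≤ Hs n := hHsm hm.le
        have h6 : K * ((1/(2*(K+1))) * X m + B₀) ≤ (1/2) * X m + K * B₀ := by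
          have := hX0 m
          nlinarith
        have := hHs0 n
        have := hX0 m
        rw [hC₁def]
        rw [hC₁def] at h4
        linarith [abs_nonneg ξ]
  -- relations between Hs, Hp, Hm
  have hHs_le : ∀ n, 1 ≤ n → Hs n ≤ max (Hp n) (Hm n) := by
    intro n hn
    refine runMax1_le _ hn fun j hj1 hj2 => ?_
    show |H j| ≤ _
    rcases le_total 0 (H j) with h | h
    · rw [abs_of_nonneg h]
      exact le_trans (le_runMax1 H hj1 hj2) (le_max_left _ _)
    · rw [abs_of_nonpos h]
      exact le_trans (le_runMax1 (fun j => -H j) hj1 hj2) (le_max_right _ _)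
  have evratio : ∀ᶠ n in atTop, lam/2 < Hm n / Hp n ∧ Hm n / Hp n < 3*lam/2 := by
    have h0 := Metric.tendsto_nhds.mp hlam (lam/2) (by positivity)
    filter_upwards [h0] with n hn
    rw [Real.dist_eq, abs_lt] at hn
    constructor
    · linarith [hn.1]
    · linarith [hn.2]
  have ev1n : ∀ᶠ n : ℕ in atTop, 1 ≤ n := eventually_ge_atTop 1
  have evHs : ∀ᶠ n in atTop, 0 < Hs n := hH.eventually_gt_atTop 0
  have evHp : ∀ᶠ n in atTop, 0 < Hp n := by
    filter_upwards [evratio, evHs, ev1n] with n h2 h3 h4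
    by_contra hle
    push_neg at hle
    rcases hle.lt_or_eq with hlt | heq
    · have hpos : 0 < Hm n / Hp n := lt_trans (by positivity) h2.1
      have hmneg : Hm n < 0 := by
        rcases div_pos_iff.mp hpos with ⟨_, hp⟩ | ⟨h, _⟩
        · exact absurd hp (not_lt.mpr hlt.le)
        · exact h
      have h5 := hHs_le n h4
      have h6 : max (Hp n) (Hm n) < 0 := max_lt hlt hmneg
      linarith
    · rw [heq, div_zero] at h2
      linarith [h2.1]
  have evHm : ∀ᶠ n in atTop, 0 < Hm n := by
    filter_upwards [evratio, evHp] with n h2 h3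
    have hpos : 0 < Hm n / Hp n := lt_trans (by positivity) h2.1
    rcases div_pos_iff.mp hpos with ⟨h, _⟩ | ⟨_, h⟩
    · exact h
    · linarith
  set c : ℝ := max 1 (3*lam/2) with hcdef
  have hc0 : 0 < c := lt_of_lt_of_le one_pos (le_max_left _ _)
  set c' : ℝ := max 1 (2/lam) with hc'def
  have hc'0 : 0 < c' := lt_of_lt_of_le one_pos (le_max_left _ _)
  have evHsc : ∀ᶠ n in atTop, Hs n ≤ c * Hp n := by
    filter_upwards [evratio, evHp, ev1n] with n h2 h3 h4
    have hHm2 : Hm n ≤ 3*lam/2 * Hp n := le_of_lt ((div_lt_iff₀ h3).mp h2.2)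
    refine (hHs_le n h4).trans (max_le ?_ ?_)
    · calc Hp n = 1 * Hp n := (one_mul _).symm
        _ ≤ c * Hp n := mul_le_mul_of_nonneg_right (le_max_left _ _) h3.le
    · exact hHm2.trans (mul_le_mul_of_nonneg_right (le_max_right _ _) h3.le)
  have evHsc' : ∀ᶠ n in atTop, Hs n ≤ c' * Hm n := by
    filter_upwards [evratio, evHp, evHm, ev1n] with n h2 h3 h5 h4
    have hHp1 : lam/2 * Hp n < Hm n := (lt_div_iff₀ h3).mp h2.1
    have hHp2 : Hp n ≤ 2/lam * Hm n := by
      rw [div_mul_eq_mul_div, le_div_iff₀ hlam0]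
      nlinarith
    refine (hHs_le n h4).trans (max_le ?_ ?_)
    · exact hHp2.trans (mul_le_mul_of_nonneg_right (le_max_right _ _) h5.le)
    · calc Hm n = 1 * Hm n := (one_mul _).symm
        _ ≤ c' * Hm n := mul_le_mul_of_nonneg_right (le_max_left _ _) h5.le
  have hHp_top : Tendsto Hp atTop atTop := by
    refine tendsto_atTop_mono' atTop ?_ (hH.atTop_div_const hc0)
    filter_upwards [evHsc] with n h
    rw [div_le_iff₀ hc0]
    linarith [h, mul_comm c (Hp n)]
  have hHm_top : Tendsto Hm atTop atTop := by
    refine tendsto_atTop_mono' atTop ?_ (hH.atTop_div_const hc'0)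
    filter_upwards [evHsc'] with n h
    rw [div_le_iff₀ hc'0]
    linarith [h, mul_comm c' (Hm n)]
  -- deviation bound for arbitrary ε
  have hdev : ∀ ε B : ℝ, 0 ≤ ε → 0 ≤ B → (∀ y, |f y| ≤ ε * |y| + B) →
      ∀ n, 1 ≤ n → |x n - H n| ≤ 2*K*ε*Hs n + (K*ε*C₁ + K*B) := by
    intro ε B hε hB hfB n hn
    obtain ⟨m, rfl⟩ := Nat.exists_eq_succ_of_ne_zero (Nat.one_le_iff_ne_zero.mp hn)
    have h1 := hstep ε B hε hB hfB m
    have h2 := hXb m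
    have h3 : Hs m ≤ Hs (m+1) := hHsm (Nat.le_succ m)
    have hKε : 0 ≤ K * ε := mul_nonneg hK0 hε
    have e0 : K*(ε*X m + B) = K*ε*X m + K*B := by ring
    have e1 : K*ε*X m ≤ K*ε*(2*Hs m + C₁) := mul_le_mul_of_nonneg_left h2 hKε
    have e2 : K*ε*Hs m ≤ K*ε*Hs (m+1) := mul_le_mul_of_nonneg_left h3 hKε
    have e3 : K*ε*(2*Hs m + C₁) = 2*(K*ε*Hs m) + K*ε*C₁ := by ring
    have e4 : 2*K*ε*Hs (m+1) = 2*(K*ε*Hs (m+1)) := by ring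
    linarith
  -- lower and upper bounds for Xp
  have hlowP : ∀ ε D : ℝ, (∀ n, 1 ≤ n → |x n - H n| ≤ 2*K*ε*Hs n + D) → 0 ≤ 2*K*ε →
      ∀ n, 1 ≤ n → Hp n ≤ Xp n + (2*K*ε*Hs n + D) := by
    intro ε D hdv hKε n hn
    refine runMax1_le H hn fun j hj1 hj2 => ?_
    have h1 := hdv j hj1
    have h2 : x j ≤ Xp n := le_runMax0 x hj2
    have h4 : H j - x j ≤ |x j - H j| := by
      rw [abs_sub_comm]; exact le_abs_self _
    have e := mul_le_mul_of_nonneg_left (hHsm hj2) hKε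
    linarith
  have huppP : ∀ ε D : ℝ, 0 ≤ D → (∀ n, 1 ≤ n → |x n - H n| ≤ 2*K*ε*Hs n + D) → 0 ≤ 2*K*ε →
      ∀ n, 1 ≤ n → 0 ≤ Hp n → Xp n ≤ |ξ| + Hp n + (2*K*ε*Hs n + D) := by
    intro ε D hD hdv hKε n hn hHpn
    refine runMax0_le x fun j hj => ?_
    rcases Nat.eq_zero_or_pos j with rfl | hj1
    · rw [hx0]
      have h5 := mul_nonneg hKε (hHs0 n)
      linarith [le_abs_self ξ]
    · have h1 := hdv j hj1
      have h2 : H j ≤ Hp n := le_runMax1 H hj1 hj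
      have h4 : x j - H j ≤ |x j - H j| := le_abs_self _
      have e := mul_le_mul_of_nonneg_left (hHsm hj) hKε
      linarith [abs_nonneg ξ]
  have hlowM : ∀ ε D : ℝ, (∀ n, 1 ≤ n → |x n - H n| ≤ 2*K*ε*Hs n + D) → 0 ≤ 2*K*ε →
      ∀ n, 1 ≤ n → Hm n ≤ Xm n + (2*K*ε*Hs n + D) := by
    intro ε D hdv hKε n hn
    refine runMax1_le (fun j => -H j) hn fun j hj1 hj2 => ?_
    show -H j ≤ _
    have h1 := hdv j hj1
    have h2 : -x j ≤ Xm n := le_runMax0 (fun j => -x j) hj2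
    have h4 : x j - H j ≤ |x j - H j| := le_abs_self _
    have e := mul_le_mul_of_nonneg_left (hHsm hj2) hKε
    linarith
  have huppM : ∀ ε D : ℝ, 0 ≤ D → (∀ n, 1 ≤ n → |x n - H n| ≤ 2*K*ε*Hs n + D) → 0 ≤ 2*K*ε →
      ∀ n, 1 ≤ n → 0 ≤ Hm n → Xm n ≤ |ξ| + Hm n + (2*K*ε*Hs n + D) := by
    intro ε D hD hdv hKε n hn hHmn
    refine runMax0_le (fun j => -x j) fun j hj => ?_
    show -x j ≤ _
    rcases Nat.eq_zero_or_pos j with rfl | hj1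
    · rw [hx0]
      have h5 := mul_nonneg hKε (hHs0 n)
      linarith [neg_le_abs ξ]
    · have h1 := hdv j hj1
      have h2 : -H j ≤ Hm n := le_runMax1 (fun j => -H j) hj1 hj
      have h4 : H j - x j ≤ |x j - H j| := by
        rw [abs_sub_comm]; exact le_abs_self _
      have e := mul_le_mul_of_nonneg_left (hHsm hj) hKε
      linarith [abs_nonneg ξ]
  -- the ratio limit for Xp/Hp
  have keyP : Tendsto (fun n => Xp n / Hp n) atTop (nhds 1) := by
    rw [Metric.tendsto_nhds]
    intro δ hδ
    have hkc : 0 ≤ K*c := mul_nonneg hK0 hc0.le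
    have h8 : (0:ℝ) < 8*(K*c+1) := by linarith
    have hεpos : 0 < δ / (8*(K*c+1)) := div_pos hδ h8
    obtain ⟨B, hB0, hfB⟩ := sublin_bound f hf hsub _ hεpos
    set ε : ℝ := δ / (8*(K*c+1)) with hεdef
    set D : ℝ := K*ε*C₁ + K*B with hDdef
    have hD0 : 0 ≤ D :=
      add_nonneg (mul_nonneg (mul_nonneg hK0 hεpos.le) hC₁) (mul_nonneg hK0 hB0)
    have hKε : 0 ≤ 2*K*ε := mul_nonneg (mul_nonneg (by norm_num) hK0) hεpos.le
    have hdv : ∀ n, 1 ≤ n → |x n - H n| ≤ 2*K*ε*Hs n + D := hdev ε B hεpos.le hB0 hfB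
    have hsmall : ∀ᶠ n in atTop, (D + |ξ|) / Hp n < δ/2 := by
      have h0 : Tendsto (fun n => (D + |ξ|) / Hp n) atTop (nhds 0) :=
        tendsto_const_nhds.div_atTop hHp_top
      exact h0.eventually (eventually_lt_nhds (by positivity))
    have hKεc : 2*K*ε*c ≤ δ/2 := by
      have e5 : 2*K*ε*c = (2*(K*c)*δ)/(8*(K*c+1)) := by rw [hεdef]; ring
      rw [e5, div_le_iff₀ h8]
      nlinarith [mul_nonneg hkc hδ.le]
    filter_upwards [ev1n, evHp, evHsc, hsmall] with n h1 h2 h3 h4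
    rw [Real.dist_eq]
    have hXu := huppP ε D hD0 hdv hKε n h1 h2.le
    have hXl := hlowP ε D hdv hKε n h1
    have e3 : 2*K*ε*Hs n ≤ 2*K*ε*(c*Hp n) := mul_le_mul_of_nonneg_left h3 hKε
    have e4 : 2*K*ε*(c*Hp n) = 2*K*ε*c*Hp n := by ring
    have habs : |Xp n - Hp n| ≤ 2*K*ε*c*Hp n + (D + |ξ|) := by
      rw [abs_le]
      constructor
      · linarith [abs_nonneg ξ]
      · linarith [abs_nonneg ξ]
    have heq : |Xp n / Hp n - 1| = |Xp n - Hp n| / Hp n := by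
      rw [div_sub_one h2.ne', abs_div, abs_of_pos h2]
    rw [heq]
    have hfin := (div_le_div_iff_of_pos_right h2).mpr habs
    have hsplit : (2*K*ε*c*Hp n + (D + |ξ|)) / Hp n = 2*K*ε*c + (D + |ξ|)/Hp n := by
      field_simp
    rw [hsplit] at hfin
    linarith
  -- the ratio limit for Xm/Hm
  have keyM : Tendsto (fun n => Xm n / Hm n) atTop (nhds 1) := by
    rw [Metric.tendsto_nhds]
    intro δ hδ
    have hkc : 0 ≤ K*c' := mul_nonneg hK0 hc'0.le
    have h8 : (0:ℝ) < 8*(K*c'+1) := by linarith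
    have hεpos : 0 < δ / (8*(K*c'+1)) := div_pos hδ h8
    obtain ⟨B, hB0, hfB⟩ := sublin_bound f hf hsub _ hεpos
    set ε : ℝ := δ / (8*(K*c'+1)) with hεdef
    set D : ℝ := K*ε*C₁ + K*B with hDdef
    have hD0 : 0 ≤ D :=
      add_nonneg (mul_nonneg (mul_nonneg hK0 hεpos.le) hC₁) (mul_nonneg hK0 hB0)
    have hKε : 0 ≤ 2*K*ε := mul_nonneg (mul_nonneg (by norm_num) hK0) hεpos.le
    have hdv : ∀ n, 1 ≤ n → |x n - H n| ≤ 2*K*ε*Hs n + D := hdev ε B hεpos.le hB0 hfB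
    have hsmall : ∀ᶠ n in atTop, (D + |ξ|) / Hm n < δ/2 := by
      have h0 : Tendsto (fun n => (D + |ξ|) / Hm n) atTop (nhds 0) :=
        tendsto_const_nhds.div_atTop hHm_top
      exact h0.eventually (eventually_lt_nhds (by positivity))
    have hKεc : 2*K*ε*c' ≤ δ/2 := by
      have e5 : 2*K*ε*c' = (2*(K*c')*δ)/(8*(K*c'+1)) := by rw [hεdef]; ring
      rw [e5, div_le_iff₀ h8]
      nlinarith [mul_nonneg hkc hδ.le]
    filter_upwards [ev1n, evHm, evHsc', hsmall] with n h1 h2 h3 h4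
    rw [Real.dist_eq]
    have hXu := huppM ε D hD0 hdv hKε n h1 h2.le
    have hXl := hlowM ε D hdv hKε n h1
    have e3 : 2*K*ε*Hs n ≤ 2*K*ε*(c'*Hm n) := mul_le_mul_of_nonneg_left h3 hKε
    have e4 : 2*K*ε*(c'*Hm n) = 2*K*ε*c'*Hm n := by ring
    have habs : |Xm n - Hm n| ≤ 2*K*ε*c'*Hm n + (D + |ξ|) := by
      rw [abs_le]
      constructor
      · linarith [abs_nonneg ξ]
      · linarith [abs_nonneg ξ]
    have heq : |Xm n / Hm n - 1| = |Xm n - Hm n| / Hm n := by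
      rw [div_sub_one h2.ne', abs_div, abs_of_pos h2]
    rw [heq]
    have hfin := (div_le_div_iff_of_pos_right h2).mpr habs
    have hsplit : (2*K*ε*c'*Hm n + (D + |ξ|)) / Hm n = 2*K*ε*c' + (D + |ξ|)/Hm n := by
      field_simp
    rw [hsplit] at hfin
    linarith
  -- divergence of Xp and Xm
  have hXp_top : Tendsto Xp atTop atTop := by
    refine tendsto_atTop_mono' atTop ?_ (hHp_top.atTop_div_const two_pos)
    filter_upwards [evHp, keyP.eventually (eventually_gt_nhds (show (1:ℝ)/2 < 1 by norm_num))]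
      with n h1 h2
    show Hp n / 2 ≤ Xp n
    have h3 := (lt_div_iff₀ h1).mp h2
    linarith
  have hXm_top : Tendsto Xm atTop atTop := by
    refine tendsto_atTop_mono' atTop ?_ (hHm_top.atTop_div_const two_pos)
    filter_upwards [evHm, keyM.eventually (eventually_gt_nhds (show (1:ℝ)/2 < 1 by norm_num))]
      with n h1 h2
    show Hm n / 2 ≤ Xm n
    have h3 := (lt_div_iff₀ h1).mp h2
    linarith
  exact ⟨hXp_top, hXm_top, keyP, keyM⟩
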